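/- Let L, U be payoff processes and suppose (σ*,τ*) ∈ T×T satisfy: (i) J^{U∨L,L,L}(σ*,τ*) = J^{U,L,L}(σ*,τ*); (ii) J^{U∨L,L,L}(σ*,τ) ≤ J^{U∨L,L,L}(σ*,τ*) for all τ ∈ T; (iii) J^{U,L,L}(σ*,τ*) ≤ J^{U,L,L}(σ,τ*) for all σ ∈ T. Then the game with payoff triple (U,L,L) has a value over T, equal to J^{U,L,L}(σ*,τ*), and (σ*,τ*) is a saddle point for it. -/

import Mathlib

open MeasureTheory

/-- The Dynkin game payoff functional
`J^{A,M,L}(σ,τ) = E[L_τ 1_{τ<σ} + A_σ 1_{σ<τ} + M_τ 1_{τ=σ}]`. -/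
noncomputable def dynkinJ {Ω : Type*} [MeasurableSpace Ω] (μ : Measure Ω)
    (A M L : ℝ → Ω → ℝ) (σ τ : Ω → ℝ) : ℝ :=
  ∫ ω, (if τ ω < σ ω then L (τ ω) ω
        else if σ ω < τ ω then A (σ ω) ω
        else M (τ ω) ω) ∂μ

/-- Corollary 2.2: if `(σ*,τ*)` satisfies the extended saddle point conditions with
upper payoff `U ∨ L`, then the game with payoff triple `(U,L,L)` has a value over `T`
equal to `J^{U,L,L}(σ*,τ*)`, and `(σ*,τ*)` is a saddle point for it. -/
theorem corollary_saddle_point {Ω : Type*} [MeasurableSpace Ω]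
    (μ : Measure Ω) [IsProbabilityMeasure μ]
    (ℱ : Filtration ℝ ‹MeasurableSpace Ω›)
    (U L : ℝ → Ω → ℝ)
    (hmeasU : Measurable fun p : ℝ × Ω => U p.1 p.2)
    (hmeasL : Measurable fun p : ℝ × Ω => L p.1 p.2)
    (hbdd : ∃ C : ℝ, ∀ t ω, |U t ω| ≤ C ∧ |L t ω| ≤ C)
    (T : Set (Ω → ℝ)) (hstop : ∀ η ∈ T, IsStoppingTime ℱ (fun ω => (η ω : WithTop ℝ)))
    (σstar τstar : Ω → ℝ) (hσstar : σstar ∈ T) (hτstar : τstar ∈ T)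
    (h1 : dynkinJ μ (fun t ω => max (U t ω) (L t ω)) L L σstar τstar =
          dynkinJ μ U L L σstar τstar)
    (h2 : ∀ τ ∈ T, dynkinJ μ (fun t ω => max (U t ω) (L t ω)) L L σstar τ ≤
          dynkinJ μ (fun t ω => max (U t ω) (L t ω)) L L σstar τstar)
    (h3 : ∀ σ' ∈ T, dynkinJ μ U L L σstar τstar ≤ dynkinJ μ U L L σ' τstar) :
    ((∀ τ ∈ T, dynkinJ μ U L L σstar τ ≤ dynkinJ μ U L L σstar τstar) ∧
     (∀ σ' ∈ T, dynkinJ μ U L L σstar τstar ≤ dynkinJ μ U L L σ' τstar)) ∧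
    (⨅ σ' : T, ⨆ τ : T, ((dynkinJ μ U L L σ'.1 τ.1 : ℝ) : EReal)) =
      ((dynkinJ μ U L L σstar τstar : ℝ) : EReal) ∧
    (⨆ τ : T, ⨅ σ' : T, ((dynkinJ μ U L L σ'.1 τ.1 : ℝ) : EReal)) =
      ((dynkinJ μ U L L σstar τstar : ℝ) : EReal) := by
  obtain ⟨C, hC⟩ := hbdd
  have hmeasUL : Measurable fun p : ℝ × Ω => max (U p.1 p.2) (L p.1 p.2) :=
    hmeasU.max hmeasL
  have hintegr : ∀ (A : ℝ → Ω → ℝ), Measurable (fun p : ℝ × Ω => A p.1 p.2) →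
      (∀ t ω, |A t ω| ≤ C) → ∀ (σ' τ : Ω → ℝ), Measurable σ' → Measurable τ →
      Integrable (fun ω => if τ ω < σ' ω then L (τ ω) ω
        else if σ' ω < τ ω then A (σ' ω) ω else L (τ ω) ω) μ := by
    intro A hA hAbd σ' τ hσ' hτ
    have hmeas : Measurable (fun ω => if τ ω < σ' ω then L (τ ω) ω
        else if σ' ω < τ ω then A (σ' ω) ω else L (τ ω) ω) := by
      have hLτ : Measurable fun ω => L (τ ω) ω :=
        hmeasL.comp (hτ.prodMk measurable_id)
      have hAσ : Measurable fun ω => A (σ' ω) ω :=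
        hA.comp (hσ'.prodMk measurable_id)
      exact Measurable.ite (measurableSet_lt hτ hσ')
        hLτ (Measurable.ite (measurableSet_lt hσ' hτ) hAσ hLτ)
    refine (integrable_const C).mono' hmeas.aestronglyMeasurable ?_
    filter_upwards with ω
    simp only [Real.norm_eq_abs]
    split_ifs with h1 h2
    · exact (hC _ ω).2
    · exact hAbd _ ω
    · exact (hC _ ω).2
  have hCU : ∀ t ω, |U t ω| ≤ C := fun t ω => (hC t ω).1
  have hCUL : ∀ t ω, |max (U t ω) (L t ω)| ≤ C := by
    intro t ω
    rcases max_cases (U t ω) (L t ω) with ⟨h, _⟩ | ⟨h, _⟩ <;> rw [h]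
    exacts [(hC t ω).1, (hC t ω).2]
  have key : ∀ τ ∈ T, dynkinJ μ U L L σstar τ ≤
      dynkinJ μ (fun t ω => max (U t ω) (L t ω)) L L σstar τ := by
    intro τ hτ
    have hmσ : Measurable σstar := by
      simpa [Function.comp_def] using (WithTop.measurable_untopD (0:ℝ)).comp (hstop _ hσstar).measurable'
    have hmτ : Measurable τ := by
      simpa [Function.comp_def] using (WithTop.measurable_untopD (0:ℝ)).comp (hstop _ hτ).measurable'
    refine integral_mono (hintegr U hmeasU hCU _ _ hmσ hmτ)
      (hintegr _ hmeasUL hCUL _ _ hmσ hmτ) ?_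
    intro ω
    dsimp only
    split_ifs
    · exact le_rfl
    · exact le_max_left _ _
    · exact le_rfl
  have part1 : ∀ τ ∈ T, dynkinJ μ U L L σstar τ ≤ dynkinJ μ U L L σstar τstar := by
    intro τ hτ
    calc dynkinJ μ U L L σstar τ
        ≤ dynkinJ μ (fun t ω => max (U t ω) (L t ω)) L L σstar τ := key τ hτ
      _ ≤ dynkinJ μ (fun t ω => max (U t ω) (L t ω)) L L σstar τstar := h2 τ hτ
      _ = dynkinJ μ U L L σstar τstar := h1
  refine ⟨⟨part1, h3⟩, ?_, ?_⟩
  · apply le_antisymm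
    · refine iInf_le_of_le ⟨σstar, hσstar⟩ (iSup_le fun τ => ?_)
      exact_mod_cast part1 τ.1 τ.2
    · refine le_iInf fun σ' => le_iSup_of_le ⟨τstar, hτstar⟩ ?_
      exact_mod_cast h3 σ'.1 σ'.2
  · apply le_antisymm
    · refine iSup_le fun τ => iInf_le_of_le ⟨σstar, hσstar⟩ ?_
      exact_mod_cast part1 τ.1 τ.2
    · refine le_iSup_of_le ⟨τstar, hτstar⟩ (le_iInf fun σ' => ?_)
      exact_mod_cast h3 σ'.1 σ'.2
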